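/- Let t ≥ 2 and r ≥ 2 be integers and n = (t+1)r − t. Suppose the vertex set of K_n is partitioned into sets V_1, …, V_t with |V_1| = 2r − 1 and |V_i| = r − 1 for all i ≥ 2, and define the t-coloring χ of E(K_n) by χ(xy) = max{ i : V_i ∩ {x,y} ≠ ∅ }. For an edge e and a color c, let χ_{e,c} be the coloring that agrees with χ on every edge other than e and assigns color c to e. Then: (a) for every edge e not contained in V_1, the coloring χ_{e,1} contains a matching of size r in color 1; and (b) for every color c ≥ 2 and every edge e disjoint from V_c, the coloring χ_{e,c} contains a matching of size r in color c. -/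

import Mathlib

/-- A matching of size `r` in color `i`: a set of `r` pairwise vertex-disjoint
(non-loop) edges of `K_n`, each assigned color `i` by `χ`. -/
def IsColorMatching {n t : ℕ} (χ : Sym2 (Fin n) → Fin t) (i : Fin t) (r : ℕ) : Prop :=
  ∃ M : Finset (Sym2 (Fin n)), M.card = r ∧
    (∀ e ∈ M, ¬ e.IsDiag ∧ χ e = i) ∧
    (∀ e ∈ M, ∀ f ∈ M, e ≠ f → ∀ v : Fin n, v ∈ e → v ∉ f)

/-- With `n = (t+1)r − t`, the partition coloring `χ(xy) = max (p x) (p y)`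
(part `0` plays the role of `V_1`, and color `0` plays the role of color `1`):
(a) recoloring any edge not contained in `V_1` with color `1` creates a matching of
size `r` in color `1`; and (b) for any color `c ≥ 2`, recoloring any edge disjoint
from `V_c` with color `c` creates a matching of size `r` in color `c`. -/
lemma exists_pairing {n : ℕ} (k : ℕ) :
    ∀ (A B : Finset (Fin n)), Disjoint A B → A.card = k → B.card = k →
    ∃ M : Finset (Sym2 (Fin n)), M.card = k ∧
      (∀ e ∈ M, ∃ a ∈ A, ∃ b ∈ B, e = s(a, b)) ∧
      (∀ e ∈ M, ∀ f ∈ M, e ≠ f → ∀ v, v ∈ e → v ∉ f) ∧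
      (∀ e ∈ M, ∀ v ∈ e, v ∈ A ∨ v ∈ B) := by
  induction k with
  | zero =>
    intro A B _ hA hB
    exact ⟨∅, by simp, by simp, by simp, by simp⟩
  | succ k ih =>
    intro A B hAB hA hB
    obtain ⟨a, ha⟩ := Finset.card_pos.mp (by omega : 0 < A.card)
    obtain ⟨b, hb⟩ := Finset.card_pos.mp (by omega : 0 < B.card)
    have hab : a ≠ b := fun h => (Finset.disjoint_left.mp hAB ha) (h ▸ hb)
    obtain ⟨M, hMc, hMs, hMd, hMv⟩ := ih (A.erase a) (B.erase b)
      (hAB.mono (Finset.erase_subset _ _) (Finset.erase_subset _ _))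
      (by rw [Finset.card_erase_of_mem ha, hA]; omega)
      (by rw [Finset.card_erase_of_mem hb, hB]; omega)
    have hanotM : ∀ e ∈ M, a ∉ e := by
      intro e he hae
      rcases hMv e he a hae with h | h
      · exact (Finset.ne_of_mem_erase h) rfl
      · exact Finset.disjoint_left.mp hAB ha (Finset.mem_of_mem_erase h)
    have hbnotM : ∀ e ∈ M, b ∉ e := by
      intro e he hbe
      rcases hMv e he b hbe with h | h
      · exact Finset.disjoint_right.mp hAB hb (Finset.mem_of_mem_erase h)
      · exact (Finset.ne_of_mem_erase h) rfl
    have hnotin : s(a, b) ∉ M := fun h => hanotM _ h (by simp)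
    refine ⟨insert s(a, b) M, ?_, ?_, ?_, ?_⟩
    · rw [Finset.card_insert_of_notMem hnotin, hMc]
    · intro e he
      rcases Finset.mem_insert.mp he with rfl | he'
      · exact ⟨a, ha, b, hb, rfl⟩
      · obtain ⟨a', ha', b', hb', rfl⟩ := hMs e he'
        exact ⟨a', Finset.mem_of_mem_erase ha', b', Finset.mem_of_mem_erase hb', rfl⟩
    · intro e he f hf hef v hve
      rcases Finset.mem_insert.mp he with rfl | he' <;>
        rcases Finset.mem_insert.mp hf with rfl | hf'
      · exact absurd rfl hef
      · rcases Sym2.mem_iff.mp hve with rfl | rfl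
        · exact hanotM f hf'
        · exact hbnotM f hf'
      · intro hvf
        rcases Sym2.mem_iff.mp hvf with rfl | rfl
        · exact hanotM e he' hve
        · exact hbnotM e he' hve
      · exact hMd e he' f hf' hef v hve
    · intro e he v hv
      rcases Finset.mem_insert.mp he with rfl | he'
      · rcases Sym2.mem_iff.mp hv with rfl | rfl
        · exact Or.inl ha
        · exact Or.inr hb
      · rcases hMv e he' v hv with h | h
        · exact Or.inl (Finset.mem_of_mem_erase h)
        · exact Or.inr (Finset.mem_of_mem_erase h)

lemma matching_aux {n t : ℕ} (χ : Sym2 (Fin n) → Fin t) (c : Fin t) (k : ℕ)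
    (A B : Finset (Fin n)) (hAB : Disjoint A B) (hA : A.card = k) (hB : B.card = k)
    (x y : Fin n) (hxy : x ≠ y)
    (hxA : x ∉ A) (hxB : x ∉ B) (hyA : y ∉ A) (hyB : y ∉ B)
    (hcol : ∀ a ∈ A, ∀ b ∈ B, χ s(a, b) = c) :
    IsColorMatching (Function.update χ s(x, y) c) c (k + 1) := by
  obtain ⟨M, hMc, hMs, hMd, hMv⟩ := exists_pairing k A B hAB hA hB
  have hxM : ∀ e ∈ M, x ∉ e := by
    intro e he hx
    rcases hMv e he x hx with h | h
    exacts [hxA h, hxB h]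
  have hyM : ∀ e ∈ M, y ∉ e := by
    intro e he hy
    rcases hMv e he y hy with h | h
    exacts [hyA h, hyB h]
  have hne : ∀ e ∈ M, e ≠ s(x, y) := by
    intro e he h
    exact hxM e he (h ▸ (by simp : x ∈ s(x, y)))
  have hnotin : s(x, y) ∉ M := fun h => hne _ h rfl
  refine ⟨insert s(x, y) M, ?_, ?_, ?_⟩
  · rw [Finset.card_insert_of_notMem hnotin, hMc]
  · intro e he
    rcases Finset.mem_insert.mp he with rfl | he'
    · exact ⟨by simpa using hxy, Function.update_self _ _ _⟩
    · obtain ⟨a, ha, b, hb, rfl⟩ := hMs e he'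
      have hab : a ≠ b := fun h => (Finset.disjoint_left.mp hAB ha) (h ▸ hb)
      refine ⟨by simpa using hab, ?_⟩
      rw [Function.update_of_ne (hne _ he'), hcol a ha b hb]
  · intro e he f hf hef v hve
    rcases Finset.mem_insert.mp he with rfl | he' <;>
      rcases Finset.mem_insert.mp hf with rfl | hf'
    · exact absurd rfl hef
    · rcases Sym2.mem_iff.mp hve with rfl | rfl
      · exact hxM f hf'
      · exact hyM f hf'
    · intro hvf
      rcases Sym2.mem_iff.mp hvf with rfl | rfl
      · exact hxM e he' hve
      · exact hyM e he' hve
    · exact hMd e he' f hf' hef v hve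

theorem painter_coloring_recolor_matching (t r : ℕ) [NeZero t] (ht : 2 ≤ t)
    (hr : 2 ≤ r) (n : ℕ) (hn : n = (t + 1) * r - t)
    (p : Fin n → Fin t)
    (h1 : (Finset.univ.filter (fun v => p v = 0)).card = 2 * r - 1)
    (hi : ∀ i : Fin t, i ≠ 0 → (Finset.univ.filter (fun v => p v = i)).card = r - 1)
    (χ : Sym2 (Fin n) → Fin t)
    (hχ : ∀ x y : Fin n, x ≠ y → χ s(x, y) = max (p x) (p y)) :
    (∀ x y : Fin n, x ≠ y → ¬(p x = 0 ∧ p y = 0) →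
      IsColorMatching (Function.update χ s(x, y) 0) 0 r) ∧
    (∀ c : Fin t, c ≠ 0 → ∀ x y : Fin n, x ≠ y → p x ≠ c → p y ≠ c →
      IsColorMatching (Function.update χ s(x, y) c) c r) := by
  set V0 : Finset (Fin n) := Finset.univ.filter (fun v => p v = 0) with hV0def
  constructor
  · intro x y hxy hp
    set S : Finset (Fin n) := V0 \ {x, y} with hSdef
    have hinter : (V0 ∩ {x, y}).card ≤ 1 := by
      rcases not_and_or.mp hp with hpx | hpy
      · have : V0 ∩ {x, y} ⊆ {y} := by
          intro v hv
          obtain ⟨hv1, hv2⟩ := Finset.mem_inter.mp hv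
          rcases Finset.mem_insert.mp hv2 with rfl | hv2
          · exact absurd (Finset.mem_filter.mp hv1).2 hpx
          · exact hv2
        simpa using Finset.card_le_card this
      · have : V0 ∩ {x, y} ⊆ {x} := by
          intro v hv
          obtain ⟨hv1, hv2⟩ := Finset.mem_inter.mp hv
          rcases Finset.mem_insert.mp hv2 with rfl | hv2
          · exact Finset.mem_singleton_self _
          · exact absurd (Finset.mem_filter.mp hv1).2 (Finset.mem_singleton.mp hv2 ▸ hpy)
        simpa using Finset.card_le_card this
    have hScard : 2 * (r - 1) ≤ S.card := by
      have h2 := Finset.card_sdiff_add_card_inter V0 ({x, y} : Finset (Fin n))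
      rw [← hSdef] at h2
      omega
    obtain ⟨A, hAS, hAcard⟩ := Finset.exists_subset_card_eq (s := S) (n := r - 1) (by omega)
    obtain ⟨B, hBS, hBcard⟩ := Finset.exists_subset_card_eq (s := S \ A) (n := r - 1)
      (by rw [Finset.card_sdiff_of_subset hAS]; omega)
    have hAB : Disjoint A B := by
      rw [Finset.disjoint_left]
      intro v hvA hvB
      exact (Finset.mem_sdiff.mp (hBS hvB)).2 hvA
    have hAV0 : ∀ v ∈ A, p v = 0 ∧ v ≠ x ∧ v ≠ y := by
      intro v hv
      obtain ⟨hv1, hv2⟩ := Finset.mem_sdiff.mp (hAS hv)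
      exact ⟨(Finset.mem_filter.mp hv1).2, fun h => hv2 (by simp [h]),
        fun h => hv2 (by simp [h])⟩
    have hBV0 : ∀ v ∈ B, p v = 0 ∧ v ≠ x ∧ v ≠ y := by
      intro v hv
      have hvS : v ∈ S := (Finset.mem_sdiff.mp (hBS hv)).1
      obtain ⟨hv1, hv2⟩ := Finset.mem_sdiff.mp hvS
      exact ⟨(Finset.mem_filter.mp hv1).2, fun h => hv2 (by simp [h]),
        fun h => hv2 (by simp [h])⟩
    have hcol : ∀ a ∈ A, ∀ b ∈ B, χ s(a, b) = 0 := by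
      intro a ha b hb
      have hab : a ≠ b := fun h => Finset.disjoint_left.mp hAB ha (h ▸ hb)
      rw [hχ a b hab, (hAV0 a ha).1, (hBV0 b hb).1]
      simp
    have key := matching_aux χ 0 (r - 1) A B hAB hAcard hBcard x y hxy
      (fun h => (hAV0 x h).2.1 rfl) (fun h => (hBV0 x h).2.1 rfl)
      (fun h => (hAV0 y h).2.2 rfl) (fun h => (hBV0 y h).2.2 rfl) hcol
    rwa [show r - 1 + 1 = r by omega] at key
  · intro c hc x y hxy hx hy
    set A : Finset (Fin n) := Finset.univ.filter (fun v => p v = c) with hAdef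
    have hAcard : A.card = r - 1 := hi c hc
    set S : Finset (Fin n) := V0 \ {x, y} with hSdef
    have hScard : r - 1 ≤ S.card := by
      have h2 := Finset.card_sdiff_add_card_inter V0 ({x, y} : Finset (Fin n))
      rw [← hSdef] at h2
      have h3 : (V0 ∩ {x, y}).card ≤ 2 := by
        refine le_trans (Finset.card_le_card Finset.inter_subset_right) ?_
        refine le_trans (Finset.card_insert_le _ _) ?_
        simp
      omega
    obtain ⟨B, hBS, hBcard⟩ := Finset.exists_subset_card_eq (s := S) (n := r - 1) hScard
    have hBV0 : ∀ v ∈ B, p v = 0 ∧ v ≠ x ∧ v ≠ y := by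
      intro v hv
      obtain ⟨hv1, hv2⟩ := Finset.mem_sdiff.mp (hBS hv)
      exact ⟨(Finset.mem_filter.mp hv1).2, fun h => hv2 (by simp [h]),
        fun h => hv2 (by simp [h])⟩
    have hAB : Disjoint A B := by
      rw [Finset.disjoint_left]
      intro v hvA hvB
      exact hc ((Finset.mem_filter.mp hvA).2 ▸ (hBV0 v hvB).1)
    have hAmem : ∀ v ∈ A, p v = c := fun v hv => (Finset.mem_filter.mp hv).2
    have hcol : ∀ a ∈ A, ∀ b ∈ B, χ s(a, b) = c := by
      intro a ha b hb
      have hab : a ≠ b := fun h => Finset.disjoint_left.mp hAB ha (h ▸ hb)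
      rw [hχ a b hab, hAmem a ha, (hBV0 b hb).1]
      exact max_eq_left (Fin.zero_le c)
    have key := matching_aux χ c (r - 1) A B hAB hAcard hBcard x y hxy
      (fun h => hx (hAmem x h)) (fun h => (hBV0 x h).2.1 rfl)
      (fun h => hy (hAmem y h)) (fun h => (hBV0 y h).2.2 rfl) hcol
    rwa [show r - 1 + 1 = r by omega] at key
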